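/- (Proposition 3) Let Sᵢ, Sⱼ be symmetric positive definite matrices, τᵢ, τⱼ > 0, Γᵢ, Γⱼ, Mᵢ, Mⱼ matrices of compatible sizes, and Hᵢ ∈ ℝ^{m×n_{xᵢ}}, Hⱼ ∈ ℝ^{m×n_{xⱼ}} with rows hᵢ,₁ᵀ,…,hᵢ,ₘᵀ and hⱼ,₁ᵀ,…,hⱼ,ₘᵀ respectively. Let μ_d^i, μ_d^j ∈ ℝ^m and reals c̃, c satisfy: (i) (μ_d^i)_{m̄} ≥ √τᵢ·‖ΓᵢᵀMᵢᵀhᵢ,_{m̄}‖_{Sᵢ⁻¹} and (μ_d^j)_{m̄} ≥ √τⱼ·‖ΓⱼᵀMⱼᵀhⱼ,_{m̄}‖_{Sⱼ⁻¹} for every m̄ = 1,…,m; and (ii) ‖μ_d^i + μ_d^j‖₂ ≤ c̃ − c. Then for all ζᵢ ∈ Uᵢ = { Γᵢz : zᵀSᵢz ≤ τᵢ } and ζⱼ ∈ Uⱼ = { Γⱼz : zᵀSⱼz ≤ τⱼ }: ‖HᵢMᵢζᵢ − HⱼMⱼζⱼ‖₂ ≤ c̃ − c. -/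

import Mathlib

open Matrix

open scoped MatrixOrder in
lemma pd_cs {n : ℕ} {S : Matrix (Fin n) (Fin n) ℝ} (hS : S.PosDef)
    (v z : Fin n → ℝ) :
    (v ⬝ᵥ z) ^ 2 ≤ (v ⬝ᵥ S⁻¹.mulVec v) * (z ⬝ᵥ S.mulVec z) := by
  have hps := hS.posSemidef
  set B := CFC.sqrt S with hB
  have hBsym : Bᵀ = B := by
    have h := (nonneg_iff_posSemidef.mp (CFC.sqrt_nonneg S)).1
    rwa [IsHermitian, conjTranspose_eq_transpose_of_trivial] at h
  have hBB : B * B = S := CFC.sqrt_mul_sqrt_self S (nonneg_iff_posSemidef.mpr hps)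
  have hSdet : IsUnit S.det := hS.det_pos.ne'.isUnit
  have hBdet : IsUnit B.det := by
    have : B.det * B.det = S.det := by rw [← det_mul, hBB]
    exact isUnit_of_mul_isUnit_left (this ▸ hSdet)
  have hBinvsym : B⁻¹ᵀ = B⁻¹ := by rw [transpose_nonsing_inv, hBsym]
  have key : v ⬝ᵥ z = (B⁻¹.mulVec v) ⬝ᵥ (B.mulVec z) := by
    rw [dotProduct_mulVec, ← mulVec_transpose, hBsym, mulVec_mulVec,
      mul_nonsing_inv _ hBdet, one_mulVec]
  have h1 : (B⁻¹.mulVec v) ⬝ᵥ (B⁻¹.mulVec v) = v ⬝ᵥ S⁻¹.mulVec v := by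
    rw [dotProduct_mulVec, ← mulVec_transpose, hBinvsym, mulVec_mulVec,
      ← Matrix.mul_inv_rev B B, hBB, dotProduct_comm]
  have h2 : (B.mulVec z) ⬝ᵥ (B.mulVec z) = z ⬝ᵥ S.mulVec z := by
    rw [dotProduct_mulVec, ← mulVec_transpose, hBsym, mulVec_mulVec, hBB, dotProduct_comm]
  rw [key, ← h1, ← h2]
  simpa [dotProduct, pow_two] using
    Finset.sum_mul_sq_le_sq_mul_sq Finset.univ (B⁻¹.mulVec v) (B.mulVec z)

/-- key single-agent bound -/
lemma agent_bound {nζ nbar nx m : ℕ}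
    {S : Matrix (Fin nbar) (Fin nbar) ℝ} (hS : S.PosDef)
    {τ : ℝ} (hτ : 0 < τ)
    (Γ : Matrix (Fin nζ) (Fin nbar) ℝ) (M : Matrix (Fin nx) (Fin nζ) ℝ)
    (H : Matrix (Fin m) (Fin nx) ℝ) (mb : Fin m)
    (z : Fin nbar → ℝ) (hz : z ⬝ᵥ S.mulVec z ≤ τ) :
    |(H * M).mulVec (Γ.mulVec z) mb| ≤
      Real.sqrt τ * Real.sqrt ((Γᵀ.mulVec (Mᵀ.mulVec (H mb))) ⬝ᵥ
        S⁻¹.mulVec (Γᵀ.mulVec (Mᵀ.mulVec (H mb)))) := by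
  set v : Fin nbar → ℝ := Γᵀ.mulVec (Mᵀ.mulVec (H mb)) with hv
  have hentry : (H * M).mulVec (Γ.mulVec z) mb = v ⬝ᵥ z := by
    have : v ⬝ᵥ z = (H mb) ⬝ᵥ (M.mulVec (Γ.mulVec z)) := by
      rw [hv, mulVec_transpose, mulVec_transpose, ← dotProduct_mulVec,
        ← dotProduct_mulVec]
    rw [this, ← mulVec_mulVec]
    simp [mulVec, dotProduct]
  have hcs := pd_cs hS v z
  have hq : 0 ≤ v ⬝ᵥ S⁻¹.mulVec v := by simpa using hS.inv.posSemidef.dotProduct_mulVec_nonneg v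
  have hzpos : 0 ≤ z ⬝ᵥ S.mulVec z := by simpa using hS.posSemidef.dotProduct_mulVec_nonneg z
  have h1 : (v ⬝ᵥ z) ^ 2 ≤ (v ⬝ᵥ S⁻¹.mulVec v) * τ :=
    hcs.trans (mul_le_mul_of_nonneg_left hz hq)
  rw [hentry]
  calc |v ⬝ᵥ z| = Real.sqrt ((v ⬝ᵥ z) ^ 2) := (Real.sqrt_sq_eq_abs _).symm
    _ ≤ Real.sqrt ((v ⬝ᵥ S⁻¹.mulVec v) * τ) := Real.sqrt_le_sqrt h1
    _ = Real.sqrt τ * Real.sqrt (v ⬝ᵥ S⁻¹.mulVec v) := by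
        rw [mul_comm, Real.sqrt_mul hτ.le]

theorem stmt_10 {nζi nbari nxi nζj nbarj nxj m : ℕ}
    (Si : Matrix (Fin nbari) (Fin nbari) ℝ) (hSi : Si.PosDef)
    (Sj : Matrix (Fin nbarj) (Fin nbarj) ℝ) (hSj : Sj.PosDef)
    (τi τj : ℝ) (hτi : 0 < τi) (hτj : 0 < τj)
    (Γi : Matrix (Fin nζi) (Fin nbari) ℝ) (Γj : Matrix (Fin nζj) (Fin nbarj) ℝ)
    (Mi : Matrix (Fin nxi) (Fin nζi) ℝ) (Mj : Matrix (Fin nxj) (Fin nζj) ℝ)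
    (Hi : Matrix (Fin m) (Fin nxi) ℝ) (Hj : Matrix (Fin m) (Fin nxj) ℝ)
    (μdi μdj : Fin m → ℝ) (ctilde c : ℝ)
    (hμdi : ∀ mb : Fin m,
      Real.sqrt τi * Real.sqrt ((Γiᵀ.mulVec (Miᵀ.mulVec (Hi mb))) ⬝ᵥ
        Si⁻¹.mulVec (Γiᵀ.mulVec (Miᵀ.mulVec (Hi mb)))) ≤ μdi mb)
    (hμdj : ∀ mb : Fin m,
      Real.sqrt τj * Real.sqrt ((Γjᵀ.mulVec (Mjᵀ.mulVec (Hj mb))) ⬝ᵥ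
        Sj⁻¹.mulVec (Γjᵀ.mulVec (Mjᵀ.mulVec (Hj mb)))) ≤ μdj mb)
    (hnorm : Real.sqrt (∑ mb, (μdi mb + μdj mb) ^ 2) ≤ ctilde - c) :
    ∀ zi : Fin nbari → ℝ, zi ⬝ᵥ Si.mulVec zi ≤ τi →
      ∀ zj : Fin nbarj → ℝ, zj ⬝ᵥ Sj.mulVec zj ≤ τj →
        Real.sqrt (∑ i, ((Hi * Mi).mulVec (Γi.mulVec zi) i -
            (Hj * Mj).mulVec (Γj.mulVec zj) i) ^ 2) ≤ ctilde - c := by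
  intro zi hzi zj hzj
  refine le_trans (Real.sqrt_le_sqrt ?_) hnorm
  apply Finset.sum_le_sum
  intro mb _
  have hai := agent_bound hSi hτi Γi Mi Hi mb zi hzi
  have haj := agent_bound hSj hτj Γj Mj Hj mb zj hzj
  have hi' := hai.trans (hμdi mb)
  have hj' := haj.trans (hμdj mb)
  have habs : |(Hi * Mi).mulVec (Γi.mulVec zi) mb - (Hj * Mj).mulVec (Γj.mulVec zj) mb|
      ≤ μdi mb + μdj mb :=
    (abs_sub _ _).trans (add_le_add hi' hj')
  calc ((Hi * Mi).mulVec (Γi.mulVec zi) mb - (Hj * Mj).mulVec (Γj.mulVec zj) mb) ^ 2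
      = |(Hi * Mi).mulVec (Γi.mulVec zi) mb - (Hj * Mj).mulVec (Γj.mulVec zj) mb| ^ 2 := by
        rw [sq_abs]
    _ ≤ (μdi mb + μdj mb) ^ 2 := pow_le_pow_left₀ (abs_nonneg _) habs 2
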